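/- Let f(z) = λz + Σ_{j≥2} a_j z^j be analytic on Δ_{r_0} with 0 < |λ| < 1 or |λ| > 1 (König's Theorem, existence). Then there exist δ with 0 < δ < r_0 and an injective holomorphic map φ : Δ_δ → ℂ with φ(0) = 0 and φ'(0) ≠ 0 such that f(φ(z)) = φ(λz) for all z ∈ Δ_δ. -/

import Mathlib

set_option maxHeartbeats 1000000

open Metric Complex Filter Set
open scoped Topology

lemma koenig_localInverse (F : ℂ → ℂ) (s : ℝ) (hs : 0 < s) (c : ℂ)
    (hF : DifferentiableOn ℂ F (ball (0:ℂ) s)) (hF0 : F 0 = 0)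
    (hF' : deriv F 0 = c) (hc : c ≠ 0) :
    ∃ r' > (0:ℝ), ∃ G : ℂ → ℂ, G 0 = 0 ∧ deriv G 0 = c⁻¹ ∧
      DifferentiableOn ℂ G (ball (0:ℂ) r') ∧
      (∀ y ∈ ball (0:ℂ) r', F (G y) = y) ∧
      ∃ r'' > (0:ℝ), ∀ x ∈ ball (0:ℂ) r'', G (F x) = x := by
  have hA : AnalyticAt ℂ F 0 := hF.analyticAt (isOpen_ball.mem_nhds (mem_ball_self hs))
  obtain ⟨p, hp⟩ := hA
  have hstrict : HasStrictDerivAt F c 0 := by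
    have h1 := hp.hasStrictDerivAt
    rwa [← hp.deriv, hF'] at h1
  set G := hstrict.localInverse F c 0 hc with hGdef
  set E := hstrict.hasStrictFDerivAt_equiv hc
  have hgf : ∀ᶠ x in 𝓝 (0:ℂ), G (F x) = x := E.eventually_left_inverse
  have hfg : ∀ᶠ y in 𝓝 (0:ℂ), F (G y) = y := by
    have := E.eventually_right_inverse
    rwa [hF0] at this
  have hG0 : G 0 = 0 := by
    have := hgf.self_of_nhds
    rwa [hF0] at this
  have hGderiv : deriv G 0 = c⁻¹ := by
    have := hstrict.to_localInverse (hf' := hc)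
    rw [hF0] at this
    exact this.hasDerivAt.deriv
  have hGcont : ContinuousAt G 0 := by
    have := E.localInverse_continuousAt
    rwa [hF0] at this
  have hGt : Tendsto G (𝓝 0) (𝓝 (0:ℂ)) := by
    simpa [hG0] using hGcont.tendsto
  -- deriv F is continuous and nonzero near 0
  have hAon : AnalyticOnNhd ℂ F (ball (0:ℂ) s) := hF.analyticOnNhd isOpen_ball
  have hderiv_cont : ContinuousAt (deriv F) 0 :=
    ((hAon.deriv.differentiableOn).continuousOn).continuousAt
      (isOpen_ball.mem_nhds (mem_ball_self hs))
  have hne : ∀ᶠ x in 𝓝 (0:ℂ), deriv F x ≠ 0 := by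
    apply hderiv_cont.eventually_ne
    rw [hF']; exact hc
  have hV : ∀ᶠ x in 𝓝 (0:ℂ), x ∈ ball (0:ℂ) s ∧ deriv F x ≠ 0 :=
    (isOpen_ball.eventually_mem (mem_ball_self hs)).and hne
  -- continuity of G on the target of the partial homeomorph
  have hGcontOn : ∀ᶠ y in 𝓝 (0:ℂ), ContinuousAt G y := by
    have htarget : (E.toOpenPartialHomeomorph F).target ∈ 𝓝 (0:ℂ) := by
      have h0 : (0:ℂ) ∈ (E.toOpenPartialHomeomorph F).target := by
        have := (E.toOpenPartialHomeomorph F).map_source E.mem_toOpenPartialHomeomorph_source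
        rwa [E.toOpenPartialHomeomorph_coe, hF0] at this
      exact (E.toOpenPartialHomeomorph F).open_target.mem_nhds h0
    filter_upwards [htarget] with y hy
    have : ContinuousAt (E.toOpenPartialHomeomorph F).symm y :=
      (E.toOpenPartialHomeomorph F).symm.continuousAt (by simpa using hy)
    simpa [hGdef, E.localInverse_def] using this
  have hall : ∀ᶠ y in 𝓝 (0:ℂ),
      (G y ∈ ball (0:ℂ) s ∧ deriv F (G y) ≠ 0) ∧ ContinuousAt G y ∧
      (∀ᶠ w in 𝓝 y, F (G w) = w) ∧ F (G y) = y :=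
    (hGt.eventually hV).and (hGcontOn.and ((hfg.eventually_nhds).and hfg))
  rw [Metric.eventually_nhds_iff_ball] at hall
  obtain ⟨r', hr', hball⟩ := hall
  refine ⟨r', hr', G, hG0, hGderiv, ?_, fun y hy => ((hball y hy).2.2.2), ?_⟩
  · intro y hy
    obtain ⟨⟨hmem, hne'⟩, hcont, hloc, _⟩ := hball y hy
    have hFd : HasDerivAt F (deriv F (G y)) (G y) :=
      (hF.differentiableAt (isOpen_ball.mem_nhds hmem)).hasDerivAt
    exact (HasDerivAt.of_local_left_inverse hcont hFd hne' hloc).differentiableAt.differentiableWithinAt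
  · rw [Metric.eventually_nhds_iff_ball] at hgf
    exact hgf


lemma koenig_attract (f : ℂ → ℂ) (r₀ : ℝ) (hr₀ : 0 < r₀) (lam : ℂ)
    (hf : DifferentiableOn ℂ f (ball (0:ℂ) r₀))
    (hf0 : f 0 = 0) (hf' : deriv f 0 = lam)
    (hlam0 : lam ≠ 0) (hlam1 : ‖lam‖ < 1) :
    ∃ δ : ℝ, ∃ φ : ℂ → ℂ, 0 < δ ∧ δ < r₀ ∧
      DifferentiableOn ℂ φ (ball (0:ℂ) δ) ∧
      Set.InjOn φ (ball (0:ℂ) δ) ∧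
      φ 0 = 0 ∧ deriv φ 0 ≠ 0 ∧
      ∀ z ∈ ball (0:ℂ) δ, f (φ z) = φ (lam * z) := by
  classical
  -- quadratic error bound
  set h : ℂ → ℂ := dslope (dslope f 0) 0 with hhdef
  have hball : ball (0:ℂ) r₀ ∈ 𝓝 (0:ℂ) := isOpen_ball.mem_nhds (mem_ball_self hr₀)
  have hh : DifferentiableOn ℂ h (ball (0:ℂ) r₀) :=
    (Complex.differentiableOn_dslope hball).mpr
      ((Complex.differentiableOn_dslope hball).mpr hf)
  have key : ∀ z : ℂ, f z = lam * z + z^2 * h z := by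
    intro z
    have h1 : (z - 0) • dslope f 0 z = f z - f 0 := sub_smul_dslope f 0 z
    have h2 : (z - 0) • h z = dslope f 0 z - dslope f 0 0 := sub_smul_dslope (dslope f 0) 0 z
    rw [dslope_same, hf'] at h2
    simp only [sub_zero, smul_eq_mul, hf0] at h1 h2
    linear_combination -h1 - z * h2
  obtain ⟨C0, hC0⟩ := (isCompact_closedBall (0:ℂ) (r₀/2)).exists_bound_of_continuousOn
    (hh.continuousOn.mono (closedBall_subset_ball (by linarith)))
  set C : ℝ := max C0 1 with hCdef
  have hC1 : (1:ℝ) ≤ C := le_max_right _ _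
  have hCpos : (0:ℝ) < C := lt_of_lt_of_le one_pos hC1
  have hquad : ∀ z ∈ closedBall (0:ℂ) (r₀/2), ‖f z - lam * z‖ ≤ C * ‖z‖^2 := by
    intro z hz
    have : f z - lam * z = z^2 * h z := by rw [key z]; ring
    rw [this, norm_mul, norm_pow]
    have h1 : ‖h z‖ ≤ C := (hC0 z hz).trans (le_max_left _ _)
    nlinarith [norm_nonneg z, sq_nonneg ‖z‖, norm_nonneg (h z)]
  -- constants
  set L : ℝ := ‖lam‖ with hLdef
  have hL0 : 0 < L := norm_pos_iff.mpr hlam0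
  have hsq : Real.sqrt L * Real.sqrt L = L := Real.mul_self_sqrt hL0.le
  have hs0 : 0 < Real.sqrt L := Real.sqrt_pos.mpr hL0
  have hs1 : Real.sqrt L < 1 := by nlinarith
  have hsl : L < Real.sqrt L := by nlinarith
  set k : ℝ := (L + Real.sqrt L)/2 with hkdef
  have hkL : L < k := by simp only [hkdef]; linarith
  have hk0 : 0 < k := lt_trans hL0 hkL
  have hk1 : k < 1 := by simp only [hkdef]; linarith
  have hk2 : k^2 < L := by
    have : k < Real.sqrt L := by simp only [hkdef]; linarith
    nlinarith
  set q : ℝ := k^2 / L with hqdef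
  have hq0 : 0 ≤ q := by positivity
  have hq1 : q < 1 := (div_lt_one hL0).mpr hk2
  set r : ℝ := min (r₀/2) ((k - L)/(2*C)) with hrdef
  have hrpos : 0 < r := lt_min (by linarith) (div_pos (by linarith) (by positivity))
  have hrr₀ : r ≤ r₀/2 := min_le_left _ _
  have hrC : C * r ≤ (k - L)/2 := by
    have h1 : r ≤ (k - L)/(2*C) := min_le_right _ _
    calc C * r ≤ C * ((k - L)/(2*C)) := by nlinarith
      _ = (k - L)/2 := by field_simp
  -- contraction bound
  have claimA : ∀ z ∈ closedBall (0:ℂ) r, ‖f z‖ ≤ k * ‖z‖ := by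
    intro z hz
    rw [mem_closedBall, dist_zero_right] at hz
    have hz2 : z ∈ closedBall (0:ℂ) (r₀/2) := by
      rw [mem_closedBall, dist_zero_right]; linarith
    have h1 := hquad z hz2
    have h2 : ‖f z‖ ≤ ‖lam * z‖ + ‖f z - lam * z‖ := by
      have := norm_add_le (lam * z) (f z - lam * z)
      simpa using this
    rw [norm_mul] at h2
    have hLl : ‖lam‖ = L := rfl
    rw [hLl] at h2
    have h4 : C * ‖z‖^2 ≤ C * r * ‖z‖ := by
      nlinarith [mul_nonneg (mul_nonneg hCpos.le (norm_nonneg z)) (sub_nonneg.mpr hz)]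
    nlinarith [norm_nonneg z]
  have claimMem : ∀ n, ∀ z ∈ closedBall (0:ℂ) r, ‖f^[n] z‖ ≤ k^n * ‖z‖ ∧
      f^[n] z ∈ closedBall (0:ℂ) r := by
    intro n
    induction n with
    | zero => intro z hz; simpa using hz
    | succ n ih =>
      intro z hz
      obtain ⟨h1, h2⟩ := ih z hz
      rw [mem_closedBall, dist_zero_right] at hz
      have h3 : ‖f (f^[n] z)‖ ≤ k * ‖f^[n] z‖ := claimA _ h2
      have hkn : k^n ≤ 1 := pow_le_one₀ hk0.le hk1.le
      have h5 : ‖f (f^[n] z)‖ ≤ k * (k^n * ‖z‖) :=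
        h3.trans (mul_le_mul_of_nonneg_left h1 hk0.le)
      have h6 : k * (k^n * ‖z‖) ≤ r := by
        have a1 : k^n * ‖z‖ ≤ ‖z‖ := mul_le_of_le_one_left (norm_nonneg z) hkn
        have a2 : k * (k^n * ‖z‖) ≤ k^n * ‖z‖ :=
          mul_le_of_le_one_left (mul_nonneg (pow_nonneg hk0.le n) (norm_nonneg z)) hk1.le
        linarith
      constructor
      · rw [Function.iterate_succ_apply']
        calc ‖f (f^[n] z)‖ ≤ k * (k^n * ‖z‖) := h5
          _ = k^(n+1) * ‖z‖ := by ring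
      · rw [Function.iterate_succ_apply', mem_closedBall, dist_zero_right]
        exact h5.trans h6
  have iter_diff : ∀ n : ℕ, DifferentiableOn ℂ (f^[n]) (ball (0:ℂ) r) := by
    intro n
    induction n with
    | zero => simpa using differentiableOn_id
    | succ n ih =>
      rw [Function.iterate_succ']
      apply hf.comp ih
      intro z hz
      have := (claimMem n z (ball_subset_closedBall hz)).2
      rw [mem_closedBall, dist_zero_right] at this
      rw [mem_ball, dist_zero_right]
      linarith
  -- the telescoping series
  set g : ℕ → ℂ → ℂ := fun n z => f^[n+1] z / lam^(n+1) - f^[n] z / lam^n with hgdef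
  have hgz : ∀ n, ∀ z ∈ closedBall (0:ℂ) r, ‖g n z‖ ≤ (C/L) * q^n * ‖z‖^2 := by
    intro n z hz
    obtain ⟨hbnd, hmem⟩ := claimMem n z hz
    have hmem2 : f^[n] z ∈ closedBall (0:ℂ) (r₀/2) := by
      rw [mem_closedBall, dist_zero_right] at hmem ⊢
      rw [mem_closedBall, dist_zero_right] at hz
      linarith
    have hql := hquad _ hmem2
    have heq : g n z = (f (f^[n] z) - lam * f^[n] z) / lam^(n+1) := by
      simp only [hgdef]
      rw [Function.iterate_succ_apply']
      rw [div_sub_div _ _ (pow_ne_zero (n+1) hlam0) (pow_ne_zero n hlam0)]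
      rw [div_eq_div_iff (by exact mul_ne_zero (pow_ne_zero _ hlam0) (pow_ne_zero _ hlam0))
        (pow_ne_zero _ hlam0)]
      ring
    rw [heq, norm_div, norm_pow]
    have hLl : ‖lam‖ = L := rfl
    rw [hLl, div_le_iff₀ (by positivity : (0:ℝ) < L^(n+1))]
    have hLne : (L:ℝ) ≠ 0 := hL0.ne'
    have h2n : ((k:ℝ)^2)^n = (k^n)^2 := by rw [← pow_mul, ← pow_mul, Nat.mul_comm]
    have hrhs : (C/L) * q^n * ‖z‖^2 * L^(n+1) = C * (k^n * ‖z‖)^2 := by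
      rw [hqdef, div_pow, h2n]
      field_simp
      ring
    rw [hrhs]
    have hw : ‖f^[n] z‖ ≤ k^n * ‖z‖ := hbnd
    have hsq2 : ‖f^[n] z‖^2 ≤ (k^n * ‖z‖)^2 := pow_le_pow_left₀ (norm_nonneg _) hw 2
    have := mul_le_mul_of_nonneg_left hsq2 hCpos.le
    linarith
  set u : ℕ → ℝ := fun n => (C/L) * q^n * r^2 with hudef
  have hu : Summable u := by
    have := (summable_geometric_of_lt_one hq0 hq1).mul_left (C/L)
    simpa [hudef, mul_comm, mul_assoc, mul_left_comm] using this.mul_right (r^2)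
  have hg : ∀ (n:ℕ) (z : ℂ), z ∈ closedBall (0:ℂ) r → ‖g n z‖ ≤ u n := by
    intro n z hz
    refine (hgz n z hz).trans ?_
    rw [mem_closedBall, dist_zero_right] at hz
    have hnn : (0:ℝ) ≤ (C/L) * q^n := by positivity
    simp only [hudef]
    exact mul_le_mul_of_nonneg_left (pow_le_pow_left₀ (norm_nonneg z) hz 2) hnn
  set ψ : ℂ → ℂ := fun z => z + ∑' n, g n z with hψdef
  have hTU : TendstoUniformlyOn (fun N z => ∑ n ∈ Finset.range N, g n z)
      (fun z => ∑' n, g n z) atTop (closedBall (0:ℂ) r) := tendstoUniformlyOn_tsum_nat hu hg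
  have hpartial : ∀ (N : ℕ) (z : ℂ), z + ∑ n ∈ Finset.range N, g n z = f^[N] z / lam^N := by
    intro N z
    have hts := Finset.sum_range_sub (fun n => f^[n] z / lam^n) N
    simp only [hgdef]
    rw [hts]
    simp [Function.iterate_zero]
  have hTUψ : TendstoUniformlyOn (fun N z => f^[N] z / lam^N) ψ atTop (closedBall (0:ℂ) r) := by
    rw [Metric.tendstoUniformlyOn_iff] at hTU ⊢
    intro ε hε
    filter_upwards [hTU ε hε] with N hN z hz
    have h1 := hN z hz
    rw [← hpartial N z]
    simpa [hψdef, dist_add_left] using h1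
  have hpt : ∀ z ∈ closedBall (0:ℂ) r, Tendsto (fun N => f^[N] z / lam^N) atTop (𝓝 (ψ z)) :=
    fun z hz => hTUψ.tendsto_at hz
  have hψdiff : DifferentiableOn ℂ ψ (ball (0:ℂ) r) := by
    refine TendstoLocallyUniformlyOn.differentiableOn
      ((hTUψ.tendstoLocallyUniformlyOn).mono ball_subset_closedBall)
      (Eventually.of_forall fun N => ?_) isOpen_ball
    exact (iter_diff N).div_const _
  have hfix : ∀ n : ℕ, f^[n] (0:ℂ) = 0 := fun n => Function.iterate_fixed hf0 n
  have hψ0 : ψ 0 = 0 := by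
    have h1 : ∀ n : ℕ, g n 0 = 0 := by
      intro n; simp [hgdef, Function.iterate_succ_apply', hfix, hf0]
    simp [hψdef, h1, tsum_zero]
  -- derivative of ψ at 0 is 1
  have htsum_bound : ∀ z ∈ closedBall (0:ℂ) r, ‖ψ z - z‖ ≤ ((C/L) * (1-q)⁻¹) * ‖z‖^2 := by
    intro z hz
    have hsum : Summable (fun n => g n z) := by
      apply Summable.of_norm_bounded (g := fun n => (C/L) * q^n * ‖z‖^2)
      · have := (summable_geometric_of_lt_one hq0 hq1).mul_left (C/L)
        simpa [mul_comm, mul_assoc, mul_left_comm] using this.mul_right (‖z‖^2)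
      · exact fun n => hgz n z hz
    have h1 : ψ z - z = ∑' n, g n z := by simp [hψdef]
    rw [h1]
    have h2 := norm_tsum_le_tsum_norm (f := fun n => g n z) ?_
    · refine h2.trans ?_
      have h3 : ∀ n : ℕ, ‖g n z‖ ≤ (C/L) * q^n * ‖z‖^2 := fun n => hgz n z hz
      have h4 : Summable (fun n : ℕ => (C/L) * q^n * ‖z‖^2) := by
        have := (summable_geometric_of_lt_one hq0 hq1).mul_left (C/L)
        simpa [mul_comm, mul_assoc, mul_left_comm] using this.mul_right (‖z‖^2)
      refine (Summable.tsum_le_tsum h3 hsum.norm h4).trans ?_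
      have h5 : ∑' n : ℕ, (C/L) * q^n * ‖z‖^2 = ((C/L) * ‖z‖^2) * (1-q)⁻¹ := by
        have he : ∀ n:ℕ, (C/L) * q^n * ‖z‖^2 = ((C/L) * ‖z‖^2) * q^n := fun n => by ring
        rw [tsum_congr he, tsum_mul_left, tsum_geometric_of_lt_one hq0 hq1]
      rw [h5]
      exact le_of_eq (by ring)
    · exact hsum.norm
  have hψderiv : HasDerivAt ψ 1 0 := by
    rw [hasDerivAt_iff_isLittleO]
    simp only [hψ0, sub_zero, smul_eq_mul, mul_one]
    rw [Asymptotics.isLittleO_iff]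
    intro c hc
    set C₂ : ℝ := max ((C/L) * (1-q)⁻¹) 1 with hC₂def
    have hC₂pos : (0:ℝ) < C₂ := lt_of_lt_of_le one_pos (le_max_right _ _)
    have hδ : (0:ℝ) < min r (c / C₂) := lt_min hrpos (by positivity)
    filter_upwards [Metric.ball_mem_nhds (0:ℂ) hδ] with z hz
    rw [mem_ball_zero_iff] at hz
    have hz1 : ‖z‖ < r := lt_of_lt_of_le hz (min_le_left _ _)
    have hz2 : ‖z‖ < c / C₂ := lt_of_lt_of_le hz (min_le_right _ _)
    have h1 : ‖ψ z - z‖ ≤ ((C/L) * (1-q)⁻¹) * ‖z‖^2 :=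
      htsum_bound z (by rw [mem_closedBall, dist_zero_right]; linarith)
    have h2 : ((C/L) * (1-q)⁻¹) ≤ C₂ := le_max_left _ _
    have h3 : ‖ψ z - z‖ ≤ C₂ * ‖z‖^2 := by nlinarith [norm_nonneg z, sq_nonneg ‖z‖]
    calc ‖ψ z - z‖ ≤ C₂ * ‖z‖^2 := h3
      _ ≤ C₂ * ((c/C₂) * ‖z‖) := by
          have := mul_le_mul_of_nonneg_left
            (mul_le_mul_of_nonneg_right hz2.le (norm_nonneg z)) hC₂pos.le
          nlinarith
      _ = c * ‖z‖ := by field_simp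
  have hψderiv0 : deriv ψ 0 = 1 := hψderiv.deriv
  -- functional equation ψ (f w) = lam * ψ w
  have hfe : ∀ w ∈ closedBall (0:ℂ) r, ψ (f w) = lam * ψ w := by
    intro w hw
    have hfw : f w ∈ closedBall (0:ℂ) r := by
      rw [mem_closedBall, dist_zero_right] at hw ⊢
      have := claimA w (by rwa [mem_closedBall, dist_zero_right])
      have a1 : k * ‖w‖ ≤ r := by nlinarith [norm_nonneg w]
      linarith
    have t1 : Tendsto (fun N => f^[N] (f w) / lam^N) atTop (𝓝 (ψ (f w))) := hpt _ hfw
    have t2 : Tendsto (fun N => lam * (f^[N+1] w / lam^(N+1))) atTop (𝓝 (lam * ψ w)) := by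
      have := (hpt w hw).comp (tendsto_add_atTop_nat 1)
      exact this.const_mul lam
    have heq : (fun N => f^[N] (f w) / lam^N) = fun N => lam * (f^[N+1] w / lam^(N+1)) := by
      funext N
      rw [← Function.iterate_succ_apply]
      rw [pow_succ]
      field_simp
    rw [heq] at t1
    exact tendsto_nhds_unique t1 t2
  -- local inverse of ψ
  have hψderiv0' : deriv ψ 0 = (1:ℂ) := hψderiv0
  obtain ⟨r₁, hr₁pos, φ, hφ0, hφd, hφdiff, hψφid, r₂, hr₂pos, hφψid⟩ :=
    koenig_localInverse ψ r hrpos 1 hψdiff hψ0 hψderiv0' one_ne_zero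
  have hψinj : Set.InjOn ψ (ball (0:ℂ) r₂) := by
    intro a ha b hb hab
    rw [← hφψid a ha, ← hφψid b hb, hab]
  -- f maps a small ball into ball r₂
  have hfc : Tendsto f (𝓝 0) (𝓝 (0:ℂ)) := by
    have := (hf.differentiableAt hball).continuousAt.tendsto
    rwa [hf0] at this
  have hfev : ∀ᶠ x in 𝓝 (0:ℂ), f x ∈ ball (0:ℂ) r₂ := hfc (ball_mem_nhds _ hr₂pos)
  rw [Metric.eventually_nhds_iff_ball] at hfev
  obtain ⟨ρ, hρpos, hρf⟩ := hfev
  set ε : ℝ := min r (min ρ r₂) with hεdef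
  have hεpos : 0 < ε := lt_min hrpos (lt_min hρpos hr₂pos)
  have hφc : Tendsto φ (𝓝 0) (𝓝 (0:ℂ)) := by
    have := (hφdiff.differentiableAt
      (isOpen_ball.mem_nhds (mem_ball_self hr₁pos))).continuousAt.tendsto
    rwa [hφ0] at this
  have hφev : ∀ᶠ z in 𝓝 (0:ℂ), φ z ∈ ball (0:ℂ) ε := hφc (ball_mem_nhds _ hεpos)
  rw [Metric.eventually_nhds_iff_ball] at hφev
  obtain ⟨δ₀, hδ₀pos, hδ₀φ⟩ := hφev
  set δ : ℝ := min δ₀ (min r₁ (r₀/2)) with hδdef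
  have hδpos : 0 < δ := lt_min hδ₀pos (lt_min hr₁pos (by linarith))
  have hδr₁ : δ ≤ r₁ := le_trans (min_le_right _ _) (min_le_left _ _)
  have hδδ₀ : δ ≤ δ₀ := min_le_left _ _
  have hsub : ball (0:ℂ) δ ⊆ ball (0:ℂ) r₁ := ball_subset_ball hδr₁
  refine ⟨δ, φ, hδpos, ?_, hφdiff.mono hsub, ?_, hφ0, ?_, ?_⟩
  · calc δ ≤ r₀/2 := le_trans (min_le_right _ _) (min_le_right _ _)
      _ < r₀ := by linarith
  · intro a ha b hb hab
    rw [← hψφid a (hsub ha), ← hψφid b (hsub hb), hab]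
  · rw [hφd]; simp
  · intro z hz
    rw [mem_ball_zero_iff] at hz
    have hz1 : z ∈ ball (0:ℂ) r₁ := by rw [mem_ball_zero_iff]; linarith [hδr₁]
    have hzδ₀ : z ∈ ball (0:ℂ) δ₀ := by rw [mem_ball_zero_iff]; linarith [hδδ₀]
    have hlz : lam * z ∈ ball (0:ℂ) δ := by
      rw [mem_ball_zero_iff, norm_mul]
      have hL1 : L ≤ 1 := hlam1.le
      have : ‖lam‖ * ‖z‖ ≤ ‖z‖ := by
        have hLl : ‖lam‖ = L := rfl
        nlinarith [norm_nonneg z]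
      linarith
    have hlz1 : lam * z ∈ ball (0:ℂ) r₁ := hsub hlz
    have hlzδ₀ : lam * z ∈ ball (0:ℂ) δ₀ := by
      rw [mem_ball_zero_iff] at hlz ⊢; linarith [hδδ₀]
    have hφzε : φ z ∈ ball (0:ℂ) ε := hδ₀φ z hzδ₀
    rw [mem_ball_zero_iff] at hφzε
    have hφzr : φ z ∈ closedBall (0:ℂ) r := by
      rw [mem_closedBall, dist_zero_right]
      have : ε ≤ r := min_le_left _ _
      linarith
    have hφzρ : φ z ∈ ball (0:ℂ) ρ := by
      rw [mem_ball_zero_iff]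
      have : ε ≤ ρ := le_trans (min_le_right _ _) (min_le_left _ _)
      linarith
    have h1 : ψ (f (φ z)) = lam * ψ (φ z) := hfe (φ z) hφzr
    have h2 : ψ (φ z) = z := hψφid z hz1
    have h3 : ψ (φ (lam * z)) = lam * z := hψφid _ hlz1
    have h4 : f (φ z) ∈ ball (0:ℂ) r₂ := hρf _ hφzρ
    have h5 : φ (lam * z) ∈ ball (0:ℂ) r₂ := by
      have := hδ₀φ _ hlzδ₀
      rw [mem_ball_zero_iff] at this ⊢
      have hεr₂ : ε ≤ r₂ := le_trans (min_le_right _ _) (min_le_right _ _)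
      linarith
    exact hψinj h4 h5 (by rw [h1, h2, h3])



theorem koenig_existence
    (f : ℂ → ℂ) (r₀ : ℝ) (hr₀ : 0 < r₀) (lam : ℂ)
    (hf : DifferentiableOn ℂ f (ball (0:ℂ) r₀))
    (hf0 : f 0 = 0) (hf' : deriv f 0 = lam)
    (hlam0 : lam ≠ 0) (hlam1 : ‖lam‖ ≠ 1) :
    ∃ δ : ℝ, ∃ φ : ℂ → ℂ, 0 < δ ∧ δ < r₀ ∧
      DifferentiableOn ℂ φ (ball (0:ℂ) δ) ∧
      Set.InjOn φ (ball (0:ℂ) δ) ∧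
      φ 0 = 0 ∧ deriv φ 0 ≠ 0 ∧
      ∀ z ∈ ball (0:ℂ) δ, f (φ z) = φ (lam * z) := by
  rcases lt_or_gt_of_ne hlam1 with hlt | hgt
  · exact koenig_attract f r₀ hr₀ lam hf hf0 hf' hlam0 hlt
  · obtain ⟨r', hr'pos, G, hG0, hGd, hGdiff, hfG, r'', hr''pos, hGf⟩ :=
      koenig_localInverse f r₀ hr₀ lam hf hf0 hf' hlam0
    have hinv0 : lam⁻¹ ≠ 0 := inv_ne_zero hlam0
    have hinv1 : ‖lam⁻¹‖ < 1 := by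
      rw [norm_inv]
      exact inv_lt_one_of_one_lt₀ hgt
    obtain ⟨δ, φ, hδpos, hδr', hφdiff, hφinj, hφ0, hφd, hfe⟩ :=
      koenig_attract G r' hr'pos lam⁻¹ hGdiff hG0 hGd hinv0 hinv1
    have hφc : Tendsto φ (𝓝 0) (𝓝 (0:ℂ)) := by
      have := (hφdiff.differentiableAt
        (isOpen_ball.mem_nhds (mem_ball_self hδpos))).continuousAt.tendsto
      rwa [hφ0] at this
    have hφev : ∀ᶠ z in 𝓝 (0:ℂ), φ z ∈ ball (0:ℂ) r' := hφc (ball_mem_nhds _ hr'pos)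
    rw [Metric.eventually_nhds_iff_ball] at hφev
    obtain ⟨δ₁, hδ₁pos, hδ₁φ⟩ := hφev
    have hlampos : (0:ℝ) < ‖lam‖ := norm_pos_iff.mpr hlam0
    set δ' : ℝ := min (min δ δ₁ / ‖lam‖) (r₀/2) with hδ'def
    have hδ'pos : 0 < δ' := lt_min (div_pos (lt_min hδpos hδ₁pos) hlampos) (by linarith)
    have hδ'r₀ : δ' < r₀ := lt_of_le_of_lt (min_le_right _ _) (by linarith)
    have hδ'δ : δ' < δ := by
      have h1 : δ' ≤ min δ δ₁ / ‖lam‖ := min_le_left _ _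
      have h2 : min δ δ₁ / ‖lam‖ < min δ δ₁ := by
        rw [div_lt_iff₀ hlampos]
        nlinarith [lt_min hδpos hδ₁pos]
      have h3 : min δ δ₁ ≤ δ := min_le_left _ _
      linarith
    have hsub : ball (0:ℂ) δ' ⊆ ball (0:ℂ) δ := ball_subset_ball hδ'δ.le
    refine ⟨δ', φ, hδ'pos, hδ'r₀, hφdiff.mono hsub, hφinj.mono hsub, hφ0, hφd, ?_⟩
    intro z hz
    rw [mem_ball_zero_iff] at hz
    have hzb : ‖z‖ < min δ δ₁ / ‖lam‖ := lt_of_lt_of_le hz (min_le_left _ _)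
    have hlzb : ‖lam * z‖ < min δ δ₁ := by
      rw [norm_mul]
      calc ‖lam‖ * ‖z‖ < ‖lam‖ * (min δ δ₁ / ‖lam‖) :=
            mul_lt_mul_of_pos_left hzb hlampos
        _ = min δ δ₁ := by
            field_simp
    have hw : lam * z ∈ ball (0:ℂ) δ := by
      rw [mem_ball_zero_iff]
      exact lt_of_lt_of_le hlzb (min_le_left _ _)
    have hwδ₁ : lam * z ∈ ball (0:ℂ) δ₁ := by
      rw [mem_ball_zero_iff]
      exact lt_of_lt_of_le hlzb (min_le_right _ _)
    have h1 : G (φ (lam * z)) = φ z := by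
      have := hfe (lam * z) hw
      rwa [inv_mul_cancel_left₀ hlam0] at this
    have h2 : φ (lam * z) ∈ ball (0:ℂ) r' := hδ₁φ _ hwδ₁
    have h3 : f (G (φ (lam * z))) = φ (lam * z) := hfG _ h2
    rw [h1] at h3
    exact h3
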